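/- Let lp be a coherent conditional lower prevision on C ⊆ C(X), let E be its natural extension to C(X) and Ē the conjugate conditional upper prevision defined by Ē(f|B) := −E(−f|B), and let ℙ_lp be the set of all conditional linear previsions P on C(X) such that P(f|B) ≥ lp(f|B) for all (f,B) ∈ C. Then ℙ_lp is nonempty and, for all (f,B) ∈ C(X): E(f|B) = min{ P(f|B) : P ∈ ℙ_lp } and Ē(f|B) = max{ P(f|B) : P ∈ ℙ_lp }; moreover, for every (f,B) ∈ C(X) and every α ∈ [E(f|B), Ē(f|B)] there exists P ∈ ℙ_lp with P(f|B) = α. -/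

import Mathlib

open scoped BigOperators

namespace IPaper

variable {X : Type*}

/-- A gamble on `X`: a bounded real-valued function. -/
def IsGamble (f : X → ℝ) : Prop := ∃ M : ℝ, ∀ x, |f x| ≤ M

/-- The indicator gamble of an event. -/
noncomputable def ind (B : Set X) : X → ℝ := Set.indicator B 1

/-- The set `G_{>0}(X)` of nonnegative nonzero gambles. -/
def Gpos (X : Type*) : Set (X → ℝ) := {f | IsGamble f ∧ 0 ≤ f ∧ f ≠ 0}

/-- A coherent set of desirable gambles. -/
structure CoherentSDG (D : Set (X → ℝ)) : Prop where
  subset_gambles : ∀ f ∈ D, IsGamble f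
  d1 : ∀ f : X → ℝ, IsGamble f → 0 ≤ f → f ≠ 0 → f ∈ D
  d2 : ∀ f ∈ D, ∀ l : ℝ, 0 < l → l • f ∈ D
  d3 : ∀ f ∈ D, ∀ g ∈ D, f + g ∈ D
  d4 : ∀ f : X → ℝ, f ≤ 0 → f ∉ D

/-- `posi A`: positive linear hull of `A`. -/
def posi (A : Set (X → ℝ)) : Set (X → ℝ) :=
  {g | ∃ (n : ℕ) (l : Fin (n + 1) → ℝ) (h : Fin (n + 1) → X → ℝ),
    (∀ i, 0 < l i) ∧ (∀ i, h i ∈ A) ∧ g = ∑ i, l i • h i}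

/-- `E(A) := posi (A ∪ G_{>0}(X))`. -/
def natExtSet (A : Set (X → ℝ)) : Set (X → ℝ) := posi (A ∪ Gpos X)

/-- `C(X)`: all pairs of a gamble and a nonempty event. -/
def domC (X : Type*) : Set ((X → ℝ) × Set X) := {p | IsGamble p.1 ∧ p.2.Nonempty}

/-- The conditional lower prevision `lp_D` derived from a set of gambles `D`. -/
noncomputable def lpOf (D : Set (X → ℝ)) (f : X → ℝ) (B : Set X) : EReal :=
  sSup (Real.toEReal '' {m : ℝ | (fun x => (f x - m) * ind B x) ∈ D})

/-- Coherence (Williams) of a conditional lower prevision on a domain `C`. -/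
def Coherent (C : Set ((X → ℝ) × Set X)) (lp : (X → ℝ) → Set X → EReal) : Prop :=
  ∃ D : Set (X → ℝ), CoherentSDG D ∧ ∀ p ∈ C, lp p.1 p.2 = lpOf D p.1 p.2

/-- The set `A_lp`. -/
def Alp (C : Set ((X → ℝ) × Set X)) (lp : (X → ℝ) → Set X → EReal) : Set (X → ℝ) :=
  {g | ∃ p ∈ C, ∃ m : ℝ, (m : EReal) < lp p.1 p.2 ∧ g = fun x => (p.1 x - m) * ind p.2 x}

/-- `E(lp) := E(A_lp)`. -/
def ElpSet (C : Set ((X → ℝ) × Set X)) (lp : (X → ℝ) → Set X → EReal) : Set (X → ℝ) :=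
  natExtSet (Alp C lp)

/-- The natural extension of `lp` to all of `C(X)`. -/
noncomputable def natExtLP (C : Set ((X → ℝ) × Set X)) (lp : (X → ℝ) → Set X → EReal)
    (f : X → ℝ) (B : Set X) : EReal :=
  lpOf (ElpSet C lp) f B

/-- Simple `B`-measurable gamble. -/
def SimpleMeas (Bfam : Set (Set X)) (g : X → ℝ) : Prop :=
  ∃ (c0 : ℝ) (n : ℕ) (c : Fin n → ℝ) (Bs : Fin n → Set X),
    0 ≤ c0 ∧ (∀ i, 0 ≤ c i) ∧ (∀ i, Bs i ∈ Bfam) ∧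
    g = fun x => c0 + ∑ i, c i * ind (Bs i) x

/-- `B`-measurable gamble: uniform limit of nonnegative simple `B`-measurable gambles. -/
def BMeas (Bfam : Set (Set X)) (g : X → ℝ) : Prop :=
  ∃ gs : ℕ → X → ℝ, (∀ n, 0 ≤ gs n ∧ SimpleMeas Bfam (gs n)) ∧
    TendstoUniformly gs g Filter.atTop

/-- A conditional linear prevision on `C(X)`: a coherent self-conjugate conditional
lower prevision on the full domain. -/
def CondLinPrev (P : (X → ℝ) → Set X → EReal) : Prop :=
  Coherent (domC X) P ∧ ∀ p ∈ domC X, P p.1 p.2 = -P (-p.1) p.2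

section Product

variable {X1 X2 : Type*}

/-- `A_{1→2}`. -/
def A12 (D2 : Set (X2 → ℝ)) (F1 : Set (Set X1)) : Set (X1 × X2 → ℝ) :=
  {g | ∃ f2 ∈ D2, ∃ B1 ∈ F1 ∪ {Set.univ}, g = fun p => f2 p.2 * ind B1 p.1}

/-- `A_{2→1}`. -/
def A21 (D1 : Set (X1 → ℝ)) (F2 : Set (Set X2)) : Set (X1 × X2 → ℝ) :=
  {g | ∃ f1 ∈ D1, ∃ B2 ∈ F2 ∪ {Set.univ}, g = fun p => f1 p.1 * ind B2 p.2}

/-- `D1 ⊗ D2`, relative to the families of conditioning events `F1`, `F2`. -/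
def indNatExt (D1 : Set (X1 → ℝ)) (D2 : Set (X2 → ℝ))
    (F1 : Set (Set X1)) (F2 : Set (Set X2)) : Set (X1 × X2 → ℝ) :=
  natExtSet (A12 D2 F1 ∪ A21 D1 F2)

/-- `marg_1(D)`. -/
def marg1 (D : Set (X1 × X2 → ℝ)) : Set (X1 → ℝ) :=
  {f | IsGamble f ∧ (fun p : X1 × X2 => f p.1) ∈ D}

/-- `marg_2(D)`. -/
def marg2 (D : Set (X1 × X2 → ℝ)) : Set (X2 → ℝ) :=
  {f | IsGamble f ∧ (fun p : X1 × X2 => f p.2) ∈ D}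

/-- `marg_1(D|B2)`. -/
def marg1c (D : Set (X1 × X2 → ℝ)) (B2 : Set X2) : Set (X1 → ℝ) :=
  {f | IsGamble f ∧ (fun p : X1 × X2 => f p.1 * ind B2 p.2) ∈ D}

/-- `marg_2(D|B1)`. -/
def marg2c (D : Set (X1 × X2 → ℝ)) (B1 : Set X1) : Set (X2 → ℝ) :=
  {f | IsGamble f ∧ (fun p : X1 × X2 => f p.2 * ind B1 p.1) ∈ D}

/-- Epistemic independence of a set of desirable gambles on `X1 × X2`. -/
def EpIndSDG (F1 : Set (Set X1)) (F2 : Set (Set X2)) (D : Set (X1 × X2 → ℝ)) : Prop :=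
  (∀ B2 ∈ F2, marg1c D B2 = marg1 D) ∧ (∀ B1 ∈ F1, marg2c D B1 = marg2 D)

/-- Independent product (of sets of desirable gambles). -/
def IndProductSDG (F1 : Set (Set X1)) (F2 : Set (Set X2))
    (D1 : Set (X1 → ℝ)) (D2 : Set (X2 → ℝ)) (D : Set (X1 × X2 → ℝ)) : Prop :=
  CoherentSDG D ∧ EpIndSDG F1 F2 D ∧ marg1 D = D1 ∧ marg2 D = D2

/-- The independent natural extension `lp1 ⊗ lp2` on `C(X1 × X2)`. -/
noncomputable def lpProd (C1 : Set ((X1 → ℝ) × Set X1)) (lp1 : (X1 → ℝ) → Set X1 → EReal)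
    (C2 : Set ((X2 → ℝ) × Set X2)) (lp2 : (X2 → ℝ) → Set X2 → EReal)
    (F1 : Set (Set X1)) (F2 : Set (Set X2)) :
    (X1 × X2 → ℝ) → Set (X1 × X2) → EReal :=
  lpOf (indNatExt (ElpSet C1 lp1) (ElpSet C2 lp2) F1 F2)

/-- An independent domain `C ⊆ C(X1 × X2)`. -/
def IndepDomain (F1 : Set (Set X1)) (F2 : Set (Set X2))
    (C : Set ((X1 × X2 → ℝ) × Set (X1 × X2))) : Prop :=
  (∀ (f1 : X1 → ℝ) (B1 : Set X1), IsGamble f1 → B1.Nonempty → ∀ B2 ∈ F2,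
    (((fun p : X1 × X2 => f1 p.1), B1 ×ˢ (Set.univ : Set X2)) ∈ C ↔
      ((fun p : X1 × X2 => f1 p.1), B1 ×ˢ B2) ∈ C)) ∧
  (∀ (f2 : X2 → ℝ) (B2 : Set X2), IsGamble f2 → B2.Nonempty → ∀ B1 ∈ F1,
    (((fun p : X1 × X2 => f2 p.2), (Set.univ : Set X1) ×ˢ B2) ∈ C ↔
      ((fun p : X1 × X2 => f2 p.2), B1 ×ˢ B2) ∈ C))

/-- Epistemic independence of a conditional lower prevision on a domain `C`. -/
def EpIndLP (F1 : Set (Set X1)) (F2 : Set (Set X2))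
    (C : Set ((X1 × X2 → ℝ) × Set (X1 × X2)))
    (lp : (X1 × X2 → ℝ) → Set (X1 × X2) → EReal) : Prop :=
  (∀ (f1 : X1 → ℝ) (B1 : Set X1), IsGamble f1 → B1.Nonempty →
    ((fun p : X1 × X2 => f1 p.1), B1 ×ˢ (Set.univ : Set X2)) ∈ C → ∀ B2 ∈ F2,
    lp (fun p : X1 × X2 => f1 p.1) (B1 ×ˢ (Set.univ : Set X2)) =
      lp (fun p : X1 × X2 => f1 p.1) (B1 ×ˢ B2)) ∧
  (∀ (f2 : X2 → ℝ) (B2 : Set X2), IsGamble f2 → B2.Nonempty →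
    ((fun p : X1 × X2 => f2 p.2), (Set.univ : Set X1) ×ˢ B2) ∈ C → ∀ B1 ∈ F1,
    lp (fun p : X1 × X2 => f2 p.2) ((Set.univ : Set X1) ×ˢ B2) =
      lp (fun p : X1 × X2 => f2 p.2) (B1 ×ˢ B2))

/-- Independent product of two conditional lower previsions, on the joint domain `C`. -/
def IndProductLP (F1 : Set (Set X1)) (F2 : Set (Set X2))
    (C1 : Set ((X1 → ℝ) × Set X1)) (lp1 : (X1 → ℝ) → Set X1 → EReal)
    (C2 : Set ((X2 → ℝ) × Set X2)) (lp2 : (X2 → ℝ) → Set X2 → EReal)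
    (C : Set ((X1 × X2 → ℝ) × Set (X1 × X2)))
    (lp : (X1 × X2 → ℝ) → Set (X1 × X2) → EReal) : Prop :=
  Coherent C lp ∧ EpIndLP F1 F2 C lp ∧
  (∀ p ∈ C1, lp (fun q : X1 × X2 => p.1 q.1) (p.2 ×ˢ (Set.univ : Set X2)) = lp1 p.1 p.2) ∧
  (∀ p ∈ C2, lp (fun q : X1 × X2 => p.1 q.2) ((Set.univ : Set X1) ×ˢ p.2) = lp2 p.1 p.2)

end Product


section Aux

variable {X : Type*}

lemma ind_of_mem {B : Set X} {x : X} (h : x ∈ B) : ind B x = 1 := by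
  simp [ind, h]

lemma ind_of_not_mem {B : Set X} {x : X} (h : x ∉ B) : ind B x = 0 := by
  simp [ind, h]

lemma ind_nonneg (B : Set X) (x : X) : 0 ≤ ind B x := by
  by_cases h : x ∈ B
  · rw [ind_of_mem h]; norm_num
  · rw [ind_of_not_mem h]

lemma ind_le_one (B : Set X) (x : X) : ind B x ≤ 1 := by
  by_cases h : x ∈ B
  · rw [ind_of_mem h]
  · rw [ind_of_not_mem h]; norm_num

lemma isGamble_shift {f : X → ℝ} (hf : IsGamble f) (m : ℝ) (B : Set X) :
    IsGamble (fun x => (f x - m) * ind B x) := by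
  obtain ⟨M, hM⟩ := hf
  refine ⟨|M| + |m|, fun x => ?_⟩
  have h1 : |f x - m| ≤ |M| + |m| := by
    calc |f x - m| ≤ |f x| + |m| := abs_sub _ _
    _ ≤ |M| + |m| := by linarith [hM x, le_abs_self M]
  calc |(f x - m) * ind B x| = |f x - m| * |ind B x| := abs_mul _ _
  _ ≤ (|M| + |m|) * 1 := by
      apply mul_le_mul h1 _ (abs_nonneg _) (by positivity)
      rw [abs_of_nonneg (ind_nonneg B x)]; exact ind_le_one B x
  _ = |M| + |m| := mul_one _

lemma IsGamble.add {f g : X → ℝ} (hf : IsGamble f) (hg : IsGamble g) :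
    IsGamble (f + g) := by
  obtain ⟨M, hM⟩ := hf; obtain ⟨N, hN⟩ := hg
  exact ⟨M + N, fun x => by
    calc |(f + g) x| = |f x + g x| := rfl
    _ ≤ |f x| + |g x| := abs_add_le _ _
    _ ≤ M + N := by linarith [hM x, hN x]⟩

lemma IsGamble.neg {f : X → ℝ} (hf : IsGamble f) : IsGamble (-f) := by
  obtain ⟨M, hM⟩ := hf
  exact ⟨M, fun x => by simpa using hM x⟩

lemma IsGamble.smul {f : X → ℝ} (hf : IsGamble f) (l : ℝ) : IsGamble (l • f) := by
  obtain ⟨M, hM⟩ := hf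
  refine ⟨|l| * M, fun x => ?_⟩
  have : |l • f x| = |l| * |f x| := abs_mul _ _
  simp only [Pi.smul_apply, smul_eq_mul] at *
  rw [abs_mul]
  exact mul_le_mul_of_nonneg_left (hM x) (abs_nonneg l)

/-! ### posi lemmas -/

lemma subset_posi {A : Set (X → ℝ)} : A ⊆ posi A := by
  intro g hg
  exact ⟨0, fun _ => 1, fun _ => g, fun _ => one_pos, fun _ => hg, by simp⟩

lemma posi_smul {A : Set (X → ℝ)} {g : X → ℝ} (hg : g ∈ posi A) {l : ℝ} (hl : 0 < l) :
    l • g ∈ posi A := by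
  obtain ⟨n, ls, hs, hls, hhs, rfl⟩ := hg
  refine ⟨n, fun i => l * ls i, hs, fun i => mul_pos hl (hls i), hhs, ?_⟩
  rw [Finset.smul_sum]
  congr 1; funext i; rw [smul_smul]

lemma posi_add_single {A : Set (X → ℝ)} {g h : X → ℝ} (hg : g ∈ posi A)
    {l : ℝ} (hl : 0 < l) (hh : h ∈ A) : g + l • h ∈ posi A := by
  obtain ⟨n, ls, hs, hls, hhs, rfl⟩ := hg
  refine ⟨n + 1, Fin.snoc ls l, Fin.snoc hs h, ?_, ?_, ?_⟩
  · intro i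
    induction i using Fin.lastCases with
    | last => simpa using hl
    | cast j => simpa using hls j
  · intro i
    induction i using Fin.lastCases with
    | last => simpa using hh
    | cast j => simpa using hhs j
  · conv_rhs => rw [Fin.sum_univ_castSucc]
    simp [Fin.snoc_castSucc, Fin.snoc_last]

lemma posi_add_aux {A : Set (X → ℝ)} :
    ∀ (n : ℕ) (ls : Fin (n + 1) → ℝ) (hs : Fin (n + 1) → X → ℝ),
      (∀ i, 0 < ls i) → (∀ i, hs i ∈ A) → ∀ g ∈ posi A, g + ∑ i, ls i • hs i ∈ posi A := by
  intro n
  induction n with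
  | zero =>
    intro ls hs hls hhs g hg
    simpa using posi_add_single hg (hls 0) (hhs 0)
  | succ k ih =>
    intro ls hs hls hhs g hg
    rw [Fin.sum_univ_castSucc, ← add_assoc]
    exact posi_add_single
      (ih (fun i => ls i.castSucc) (fun i => hs i.castSucc)
        (fun i => hls _) (fun i => hhs _) g hg) (hls _) (hhs _)

lemma posi_add {A : Set (X → ℝ)} {g g' : X → ℝ} (hg : g ∈ posi A) (hg' : g' ∈ posi A) :
    g + g' ∈ posi A := by
  obtain ⟨n, ls, hs, hls, hhs, rfl⟩ := hg'
  exact posi_add_aux n ls hs hls hhs g hg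

lemma posi_subset {A D : Set (X → ℝ)} (hAD : A ⊆ D)
    (hsmul : ∀ f ∈ D, ∀ l : ℝ, 0 < l → l • f ∈ D)
    (hadd : ∀ f ∈ D, ∀ g ∈ D, f + g ∈ D) : posi A ⊆ D := by
  have main : ∀ (n : ℕ) (ls : Fin (n + 1) → ℝ) (hs : Fin (n + 1) → X → ℝ),
      (∀ i, 0 < ls i) → (∀ i, hs i ∈ A) → ∑ i, ls i • hs i ∈ D := by
    intro n
    induction n with
    | zero =>
      intro ls hs hls hhs
      simpa using hsmul _ (hAD (hhs 0)) _ (hls 0)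
    | succ k ih =>
      intro ls hs hls hhs
      rw [Fin.sum_univ_castSucc]
      exact hadd _ (ih (fun i => ls i.castSucc) (fun i => hs i.castSucc)
        (fun i => hls _) (fun i => hhs _)) _ (hsmul _ (hAD (hhs _)) _ (hls _))
  rintro g ⟨n, ls, hs, hls, hhs, rfl⟩
  exact main n ls hs hls hhs

/-! ### EReal sup lemmas -/

lemma ereal_coe_le_of_forall_lt {r : ℝ} {b : EReal} (h : ∀ m : ℝ, m < r → (m : EReal) ≤ b) :
    (r : EReal) ≤ b := by
  have hb : (⊥ : EReal) < b := lt_of_lt_of_le (EReal.bot_lt_coe _) (h (r - 1) (by linarith))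
  refine le_of_forall_lt ?_
  intro c hc
  induction c with
  | bot => exact hb
  | coe m =>
    have hm : m < r := by exact_mod_cast hc
    have : ((m + r) / 2 : ℝ) < r := by linarith
    calc ((m : ℝ) : EReal) < (((m + r) / 2 : ℝ) : EReal) := by exact_mod_cast (by linarith : m < (m+r)/2)
    _ ≤ b := h _ this
  | top => exact absurd hc (by simp)

lemma ereal_sSup_image {S : Set ℝ} (hne : S.Nonempty) (hbdd : BddAbove S) :
    sSup (Real.toEReal '' S) = ((sSup S : ℝ) : EReal) := by
  apply le_antisymm
  · apply sSup_le
    rintro x ⟨m, hm, rfl⟩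
    exact_mod_cast le_csSup hbdd hm
  · apply ereal_coe_le_of_forall_lt
    intro m hm
    obtain ⟨m', hm', hmm'⟩ := exists_lt_of_lt_csSup hne hm
    calc (m : EReal) ≤ (m' : EReal) := by exact_mod_cast hmm'.le
    _ ≤ sSup (Real.toEReal '' S) := le_sSup ⟨m', hm', rfl⟩

/-! ### lpOf machinery -/

/-- The set of prices `m` making `(f - m)·1_B` desirable. -/
def SM (D : Set (X → ℝ)) (f : X → ℝ) (B : Set X) : Set ℝ :=
  {m | (fun x => (f x - m) * ind B x) ∈ D}

lemma lpOf_def (D : Set (X → ℝ)) (f : X → ℝ) (B : Set X) :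
    lpOf D f B = sSup (Real.toEReal '' SM D f B) := rfl

lemma mem_SM_of_lt_on {D : Set (X → ℝ)} (hD : CoherentSDG D) {f : X → ℝ}
    (hf : IsGamble f) {B : Set X} (hB : B.Nonempty) {m : ℝ} (h : ∀ x ∈ B, m < f x) :
    m ∈ SM D f B := by
  obtain ⟨x0, hx0⟩ := hB
  apply hD.d1 _ (isGamble_shift hf m B)
  · intro x
    by_cases hx : x ∈ B
    · have := h x hx
      have := ind_of_mem hx
      simp only [Pi.zero_apply]
      nlinarith [ind_nonneg B x]
    · simp [ind_of_not_mem hx]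
  · intro h0
    have := congrFun h0 x0
    rw [ind_of_mem hx0] at this
    simp only [mul_one, Pi.zero_apply] at this
    have := h x0 hx0
    linarith

lemma SM_nonempty {D : Set (X → ℝ)} (hD : CoherentSDG D) {f : X → ℝ}
    (hf : IsGamble f) {B : Set X} (hB : B.Nonempty) : (SM D f B).Nonempty := by
  obtain ⟨M, hM⟩ := hf
  refine ⟨-M - 1, mem_SM_of_lt_on hD ⟨M, hM⟩ hB fun x _ => ?_⟩
  have := hM x
  have := abs_le.1 this
  linarith [this.1]

lemma SM_bddAbove {D : Set (X → ℝ)} (hD : CoherentSDG D) {f : X → ℝ}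
    (hf : IsGamble f) {B : Set X} : BddAbove (SM D f B) := by
  obtain ⟨M, hM⟩ := hf
  refine ⟨M, fun m hm => ?_⟩
  by_contra hc
  push_neg at hc
  refine hD.d4 _ ?_ hm
  intro x
  have := abs_le.1 (hM x)
  show (f x - m) * ind B x ≤ 0
  by_cases hx : x ∈ B
  · rw [ind_of_mem hx, mul_one]
    linarith [this.2]
  · simp [ind_of_not_mem hx]

lemma SM_downward {D : Set (X → ℝ)} (hD : CoherentSDG D) {f : X → ℝ} {B : Set X}
    {m m' : ℝ} (hm' : m' ∈ SM D f B) (hle : m ≤ m') : m ∈ SM D f B := by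
  rcases eq_or_lt_of_le hle with rfl | hlt
  · exact hm'
  rcases Set.eq_empty_or_nonempty B with rfl | ⟨x0, hx0⟩
  · exfalso
    refine hD.d4 _ ?_ hm'
    intro x; simp [ind_of_not_mem (Set.notMem_empty x)]
  · have hGmem : (fun x => (m' - m) * ind B x) ∈ D := by
      apply hD.d1
      · exact ⟨m' - m, fun x => by
          rw [abs_of_nonneg (by nlinarith [ind_nonneg B x] : (0:ℝ) ≤ (m' - m) * ind B x)]
          nlinarith [ind_le_one B x, ind_nonneg B x]⟩
      · intro x; simp only [Pi.zero_apply]; nlinarith [ind_nonneg B x]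
      · intro h0
        have := congrFun h0 x0
        rw [ind_of_mem hx0] at this
        simp only [Pi.zero_apply, mul_one] at this
        linarith
    have := hD.d3 _ hm' _ hGmem
    have heq : (fun x => (f x - m') * ind B x) + (fun x => (m' - m) * ind B x)
        = fun x => (f x - m) * ind B x := by
      funext x; simp only [Pi.add_apply]; ring
    rwa [heq] at this

lemma SM_add_neg {D : Set (X → ℝ)} (hD : CoherentSDG D) {f : X → ℝ} {B : Set X}
    {m m' : ℝ} (hm : m ∈ SM D f B) (hm' : m' ∈ SM D (-f) B) : m + m' < 0 := by
  by_contra hc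
  push_neg at hc
  have hsum := hD.d3 _ hm _ hm'
  refine hD.d4 _ ?_ hsum
  intro x
  simp only [Pi.add_apply, Pi.neg_apply, Pi.zero_apply]
  nlinarith [ind_nonneg B x]

lemma lpOf_eq_real {D : Set (X → ℝ)} (hD : CoherentSDG D) {f : X → ℝ}
    (hf : IsGamble f) {B : Set X} (hB : B.Nonempty) :
    lpOf D f B = ((sSup (SM D f B) : ℝ) : EReal) :=
  ereal_sSup_image (SM_nonempty hD hf hB) (SM_bddAbove hD hf)

lemma lpOf_mono {D D' : Set (X → ℝ)} (h : D ⊆ D') (f : X → ℝ) (B : Set X) :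
    lpOf D f B ≤ lpOf D' f B :=
  sSup_le_sSup (Set.image_mono fun m hm => h hm)

lemma le_lpOf_of_mem {D : Set (X → ℝ)} {f : X → ℝ} {B : Set X} {m : ℝ}
    (hm : m ∈ SM D f B) : (m : EReal) ≤ lpOf D f B :=
  le_sSup ⟨m, hm, rfl⟩

lemma mem_SM_of_lt_lpOf {D : Set (X → ℝ)} (hD : CoherentSDG D) {f : X → ℝ} {B : Set X}
    {m : ℝ} (h : (m : EReal) < lpOf D f B) : m ∈ SM D f B := by
  rw [lpOf_def, lt_sSup_iff] at h
  obtain ⟨x, ⟨m', hm', rfl⟩, hlt⟩ := h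
  exact SM_downward hD hm' (by exact_mod_cast hlt.le)

/-! ### Coherence of natural extensions -/

lemma gpos_subset_coherent {D : Set (X → ℝ)} (hD : CoherentSDG D) : Gpos X ⊆ D :=
  fun f ⟨h1, h2, h3⟩ => hD.d1 f h1 h2 h3

lemma coherent_posi {A D : Set (X → ℝ)} (hD : CoherentSDG D)
    (hGA : Gpos X ⊆ A) (hAD : A ⊆ D) : CoherentSDG (posi A) := by
  have hsub : posi A ⊆ D := posi_subset hAD hD.d2 hD.d3
  exact
    { subset_gambles := fun f hf => hD.subset_gambles f (hsub hf)
      d1 := fun f h1 h2 h3 => subset_posi (hGA ⟨h1, h2, h3⟩)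
      d2 := fun f hf l hl => posi_smul hf hl
      d3 := fun f hf g hg => posi_add hf hg
      d4 := fun f hf hmem => hD.d4 f hf (hsub hmem) }

lemma Alp_subset {C : Set ((X → ℝ) × Set X)} {lp : (X → ℝ) → Set X → EReal}
    {D : Set (X → ℝ)} (hD : CoherentSDG D)
    (h : ∀ p ∈ C, lp p.1 p.2 ≤ lpOf D p.1 p.2) : Alp C lp ⊆ D := by
  rintro g ⟨p, hp, m, hm, rfl⟩
  exact mem_SM_of_lt_lpOf hD (lt_of_lt_of_le hm (h p hp))

lemma ElpSet_subset {C : Set ((X → ℝ) × Set X)} {lp : (X → ℝ) → Set X → EReal}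
    {D : Set (X → ℝ)} (hD : CoherentSDG D)
    (h : ∀ p ∈ C, lp p.1 p.2 ≤ lpOf D p.1 p.2) : ElpSet C lp ⊆ D :=
  posi_subset (Set.union_subset (Alp_subset hD h) (gpos_subset_coherent hD)) hD.d2 hD.d3

lemma ElpSet_coherent {C : Set ((X → ℝ) × Set X)} {lp : (X → ℝ) → Set X → EReal}
    (hlp : Coherent C lp) : CoherentSDG (ElpSet C lp) := by
  obtain ⟨D0, hD0, heq⟩ := hlp
  exact coherent_posi hD0 Set.subset_union_right
    (Set.union_subset (Alp_subset hD0 fun p hp => (heq p hp).le) (gpos_subset_coherent hD0))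

lemma Alp_subset_ElpSet {C : Set ((X → ℝ) × Set X)} {lp : (X → ℝ) → Set X → EReal} :
    Alp C lp ⊆ ElpSet C lp := fun g hg => subset_posi (Set.mem_union_left _ hg)

lemma lp_le_natExtLP {C : Set ((X → ℝ) × Set X)} (hC : C ⊆ domC X)
    {lp : (X → ℝ) → Set X → EReal} (hlp : Coherent C lp) :
    ∀ p ∈ C, lp p.1 p.2 ≤ natExtLP C lp p.1 p.2 := by
  intro p hp
  obtain ⟨D0, hD0, heq⟩ := hlp
  obtain ⟨hg, hB⟩ := hC hp
  rw [heq p hp, lpOf_eq_real hD0 hg hB]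
  apply ereal_coe_le_of_forall_lt
  intro m hm
  have hmem : m ∈ SM (ElpSet C lp) p.1 p.2 := by
    apply Alp_subset_ElpSet
    refine ⟨p, hp, m, ?_, rfl⟩
    rw [heq p hp, lpOf_eq_real hD0 hg hB]
    exact_mod_cast hm
  exact le_lpOf_of_mem hmem

/-! ### Maximal coherent sets -/

lemma exists_maximal_coherent {D : Set (X → ℝ)} (hD : CoherentSDG D) :
    ∃ M, CoherentSDG M ∧ D ⊆ M ∧
      ∀ f : X → ℝ, IsGamble f → f ≠ 0 → (f ∈ M ∨ -f ∈ M) := by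
  set S : Set (Set (X → ℝ)) := {E | CoherentSDG E} with hS
  have hzorn : ∀ c ⊆ S, IsChain (· ⊆ ·) c → c.Nonempty → ∃ ub ∈ S, ∀ s ∈ c, s ⊆ ub := by
    intro c hcS hchain ⟨e, he⟩
    refine ⟨⋃₀ c, ?_, fun s hs => Set.subset_sUnion_of_mem hs⟩
    refine
      { subset_gambles := ?_, d1 := ?_, d2 := ?_, d3 := ?_, d4 := ?_ }
    · rintro f ⟨E, hE, hf⟩
      exact (hcS hE).subset_gambles f hf
    · intro f h1 h2 h3
      exact ⟨e, he, (hcS he).d1 f h1 h2 h3⟩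
    · rintro f ⟨E, hE, hf⟩ l hl
      exact ⟨E, hE, (hcS hE).d2 f hf l hl⟩
    · rintro f ⟨E, hE, hf⟩ g ⟨F, hF, hg⟩
      rcases hchain.total hE hF with h | h
      · exact ⟨F, hF, (hcS hF).d3 f (h hf) g hg⟩
      · exact ⟨E, hE, (hcS hE).d3 f hf g (h hg)⟩
    · rintro f hf ⟨E, hE, hmem⟩
      exact (hcS hE).d4 f hf hmem
  obtain ⟨M, hDM, hMmax⟩ := zorn_subset_nonempty S hzorn D hD
  have hM : CoherentSDG M := hMmax.1
  refine ⟨M, hM, hDM, ?_⟩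
  intro f hfg hfne
  by_contra hc
  push_neg at hc
  obtain ⟨hf1, hf2⟩ := hc
  -- extend M by f
  set M' : Set (X → ℝ) :=
    M ∪ {g | ∃ l : ℝ, 0 < l ∧ g = l • f} ∪
      {g | ∃ l : ℝ, 0 < l ∧ ∃ e ∈ M, g = l • f + e} with hM'
  have hMM' : M ⊆ M' := fun g hg => Or.inl (Or.inl hg)
  have hfM' : f ∈ M' := Or.inl (Or.inr ⟨1, one_pos, (one_smul ℝ f).symm⟩)
  -- key: no nonpositive combination
  have hkey : ∀ l : ℝ, 0 < l → ∀ e, (e ∈ M ∨ e = 0) → ¬ (l • f + e ≤ 0) := by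
    intro l hl e he hle
    rcases he with he | rfl
    · -- -f = (1/l) • (e + w)  with w := -(l•f+e) ≥ 0
      set w : X → ℝ := -(l • f + e) with hw
      have hw0 : 0 ≤ w := by
        intro x
        simp only [hw, Pi.neg_apply, Pi.zero_apply, Pi.add_apply, Pi.smul_apply, smul_eq_mul]
        have := hle x
        simp only [Pi.add_apply, Pi.smul_apply, smul_eq_mul, Pi.zero_apply] at this
        linarith
      have hmem : e + w ∈ M := by
        rcases eq_or_ne w 0 with hwz | hwz
        · have : e + w = e := by rw [hwz, add_zero]
          rw [this]; exact he
        · refine hM.d3 _ he _ (hM.d1 _ ?_ hw0 hwz)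
          exact (hfg.smul l |>.add (hM.subset_gambles e he)).neg
      have hneg : -f = (1 / l) • (e + w) := by
        funext x
        simp only [hw, Pi.neg_apply, Pi.smul_apply, Pi.add_apply, smul_eq_mul]
        field_simp
        ring
      have : -f ∈ M := by
        rw [hneg]
        exact hM.d2 _ hmem _ (by positivity)
      exact hf2 this
    · -- l • f ≤ 0, so f ≤ 0 and -f ∈ Gpos ⊆ M
      have hfle : f ≤ 0 := by
        intro x
        have := hle x
        simp only [Pi.add_apply, Pi.smul_apply, smul_eq_mul, add_zero, Pi.zero_apply] at this ⊢
        nlinarith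
      have : -f ∈ M := hM.d1 _ hfg.neg (by intro x; simpa using hfle x)
        (by simpa [neg_eq_zero] using hfne)
      exact hf2 this
  have hM' : CoherentSDG M' := by
    refine { subset_gambles := ?_, d1 := ?_, d2 := ?_, d3 := ?_, d4 := ?_ }
    · rintro g ((hg | ⟨l, hl, rfl⟩) | ⟨l, hl, e, he, rfl⟩)
      · exact hM.subset_gambles g hg
      · exact hfg.smul l
      · exact (hfg.smul l).add (hM.subset_gambles e he)
    · intro g h1 h2 h3
      exact hMM' (hM.d1 g h1 h2 h3)
    · rintro g ((hg | ⟨l, hl, rfl⟩) | ⟨l, hl, e, he, rfl⟩) l' hl'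
      · exact hMM' (hM.d2 g hg l' hl')
      · exact Or.inl (Or.inr ⟨l' * l, mul_pos hl' hl, (smul_smul l' l f)⟩)
      · refine Or.inr ⟨l' * l, mul_pos hl' hl, l' • e, hM.d2 e he l' hl', ?_⟩
        rw [smul_add, smul_smul]
    · rintro g ((hg | ⟨l, hl, rfl⟩) | ⟨l, hl, e, he, rfl⟩) g'
        ((hg' | ⟨l', hl', rfl⟩) | ⟨l', hl', e', he', rfl⟩)
      · exact hMM' (hM.d3 g hg g' hg')
      · exact Or.inr ⟨l', hl', g, hg, add_comm g (l' • f)⟩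
      · exact Or.inr ⟨l', hl', e' + g, hM.d3 e' he' g hg,
          by rw [add_comm g, add_assoc, add_comm e' g, ← add_assoc, add_assoc]⟩
      · exact Or.inr ⟨l, hl, g', hg', rfl⟩
      · exact Or.inl (Or.inr ⟨l + l', by positivity, by rw [add_smul]⟩)
      · exact Or.inr ⟨l + l', by positivity, e',  he', by rw [add_smul]; abel⟩
      · exact Or.inr ⟨l, hl, e + g', hM.d3 e he g' hg', by rw [add_assoc]⟩
      · exact Or.inr ⟨l + l', by positivity, e, he, by rw [add_smul]; abel⟩
      · exact Or.inr ⟨l + l', by positivity, e + e', hM.d3 e he e' he',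
          by rw [add_smul]; abel⟩
    · rintro g hgle ((hg | ⟨l, hl, rfl⟩) | ⟨l, hl, e, he, rfl⟩)
      · exact hM.d4 g hgle hg
      · exact hkey l hl 0 (Or.inr rfl) (by simpa using hgle)
      · exact hkey l hl e (Or.inl he) hgle
  have heqM : M' = M := hMmax.eq_of_ge (hS ▸ hM') hMM'
  exact hf1 (heqM ▸ hfM')

/-- In a maximal (complete) coherent set, lower and upper previsions coincide. -/
lemma maximal_sSup_SM {M : Set (X → ℝ)} (hM : CoherentSDG M)
    (hcomp : ∀ f : X → ℝ, IsGamble f → f ≠ 0 → (f ∈ M ∨ -f ∈ M))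
    {g : X → ℝ} (hg : IsGamble g) {B : Set X} (hB : B.Nonempty) :
    sSup (SM M g B) = -sSup (SM M (-g) B) := by
  set α := sSup (SM M g B) with hα
  set β := sSup (SM M (-g) B) with hβ
  have hne : (SM M g B).Nonempty := SM_nonempty hM hg hB
  have hne' : (SM M (-g) B).Nonempty := SM_nonempty hM hg.neg hB
  have hbdd : BddAbove (SM M g B) := SM_bddAbove hM hg
  have hbdd' : BddAbove (SM M (-g) B) := SM_bddAbove hM hg.neg
  have hle : α ≤ -β := by
    apply csSup_le hne
    intro m hm
    have : ∀ m' ∈ SM M (-g) B, m' ≤ -m := fun m' hm' => by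
      have := SM_add_neg hM hm hm'; linarith
    have : β ≤ -m := csSup_le hne' this
    linarith
  have hge : -β ≤ α := by
    by_contra hc
    push_neg at hc
    set r := (α + -β) / 2 with hr
    have hr1 : α < r := by rw [hr]; linarith
    have hr2 : β < -r := by rw [hr]; linarith
    have hrS : r ∉ SM M g B := fun hmem => absurd (le_csSup hbdd hmem) (not_le.2 hr1)
    have hrS' : (-r) ∉ SM M (-g) B := fun hmem => absurd (le_csSup hbdd' hmem) (not_le.2 hr2)
    set h : X → ℝ := fun x => (g x - r) * ind B x with hh
    rcases eq_or_ne h 0 with hz | hnz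
    · -- g = r on B, so every m < r is in SM M g B, contradicting α < r
      have : ∀ x ∈ B, g x = r := by
        intro x hx
        have := congrFun hz x
        rw [hh] at this
        simp only [ind_of_mem hx, mul_one, Pi.zero_apply] at this
        linarith
      have hmem : ∀ m : ℝ, m < r → m ∈ SM M g B := fun m hm =>
        mem_SM_of_lt_on hM hg hB fun x hx => by rw [this x hx]; exact hm
      have : r ≤ α := by
        by_contra hc2
        push_neg at hc2
        have h3 := le_csSup hbdd (hmem ((α + r)/2) (by linarith))
        linarith
      linarith
    · rcases hcomp h (isGamble_shift hg r B) hnz with hmem | hmem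
      · exact hrS hmem
      · refine hrS' ?_
        have : -h = fun x => ((-g) x - (-r)) * ind B x := by
          funext x; simp only [hh, Pi.neg_apply]; ring
        show (fun x => ((-g) x - (-r)) * ind B x) ∈ M
        rw [← this]; exact hmem
  linarith

lemma maximal_lpOf_selfconj {M : Set (X → ℝ)} (hM : CoherentSDG M)
    (hcomp : ∀ f : X → ℝ, IsGamble f → f ≠ 0 → (f ∈ M ∨ -f ∈ M))
    {g : X → ℝ} (hg : IsGamble g) {B : Set X} (hB : B.Nonempty) :
    lpOf M g B = -lpOf M (-g) B := by
  rw [lpOf_eq_real hM hg hB, lpOf_eq_real hM hg.neg hB,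
    maximal_sSup_SM hM hcomp hg hB]
  rw [← EReal.coe_neg]

lemma maximal_condLinPrev {M : Set (X → ℝ)} (hM : CoherentSDG M)
    (hcomp : ∀ f : X → ℝ, IsGamble f → f ≠ 0 → (f ∈ M ∨ -f ∈ M)) :
    CondLinPrev (X := X) (lpOf M) := by
  constructor
  · exact ⟨M, hM, fun p _ => rfl⟩
  · rintro p ⟨hg, hB⟩
    exact maximal_lpOf_selfconj hM hcomp hg hB

lemma csSup_ge_of_forall_lt {S : Set ℝ} {c : ℝ} (h : ∀ m : ℝ, m < c → m ∈ S)
    (hbdd : BddAbove S) : c ≤ sSup S := by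
  by_contra hc
  push_neg at hc
  have hm := le_csSup hbdd (h ((sSup S + c) / 2) (by linarith))
  linarith

lemma sSup_SM_le_neg {D : Set (X → ℝ)} (hD : CoherentSDG D) {g : X → ℝ}
    (hg : IsGamble g) {B : Set X} (hB : B.Nonempty) :
    sSup (SM D g B) ≤ -sSup (SM D (-g) B) := by
  have hne : (SM D g B).Nonempty := SM_nonempty hD hg hB
  have hne' : (SM D (-g) B).Nonempty := SM_nonempty hD hg.neg hB
  apply csSup_le hne
  intro m hm
  have h2 : sSup (SM D (-g) B) ≤ -m := csSup_le hne' fun m' hm' => by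
    have := SM_add_neg hD hm hm'; linarith
  linarith

/-! ### The attainment construction -/

/-- Auxiliary set of gambles forcing the price of `f` given `B` to be `α`. -/
def Tset (f : X → ℝ) (B : Set X) (α : ℝ) : Set (X → ℝ) :=
  {t | ∃ l c : ℝ, 0 < l ∧
    ((c < α ∧ t = fun x => l * ((f x - c) * ind B x)) ∨
     (α < c ∧ t = fun x => l * ((c - f x) * ind B x)))}

lemma Tset_smul {f : X → ℝ} {B : Set X} {α : ℝ} {t : X → ℝ} (ht : t ∈ Tset f B α)
    {l' : ℝ} (hl' : 0 < l') : l' • t ∈ Tset f B α := by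
  obtain ⟨l, c, hl, hcase⟩ := ht
  refine ⟨l' * l, c, mul_pos hl' hl, ?_⟩
  rcases hcase with ⟨hc, rfl⟩ | ⟨hc, rfl⟩
  · exact Or.inl ⟨hc, by funext x; simp [mul_assoc]⟩
  · exact Or.inr ⟨hc, by funext x; simp [mul_assoc]⟩

lemma Tset_gamble {f : X → ℝ} (hf : IsGamble f) {B : Set X} {α : ℝ} {t : X → ℝ}
    (ht : t ∈ Tset f B α) : IsGamble t := by
  obtain ⟨l, c, hl, hcase⟩ := ht
  have h1 : IsGamble (fun x => (f x - c) * ind B x) := isGamble_shift hf c B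
  have h2 : IsGamble (fun x => ((-f) x - (-c)) * ind B x) := isGamble_shift hf.neg (-c) B
  rcases hcase with ⟨hc, rfl⟩ | ⟨hc, rfl⟩
  · have := h1.smul l
    have heq : l • (fun x => (f x - c) * ind B x) = fun x => l * ((f x - c) * ind B x) := by
      funext x; simp
    rwa [heq] at this
  · have := h2.smul l
    have heq : l • (fun x => ((-f) x - (-c)) * ind B x)
        = fun x => l * ((c - f x) * ind B x) := by
      funext x; simp only [Pi.smul_apply, Pi.neg_apply, smul_eq_mul]; ring_nf
    rwa [heq] at this

lemma Tset_add {f : X → ℝ} {B : Set X} {α : ℝ} {t t' : X → ℝ}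
    (ht : t ∈ Tset f B α) (ht' : t' ∈ Tset f B α) :
    t + t' ∈ Tset f B α ∨ ∃ d : ℝ, 0 < d ∧ t + t' = fun x => d * ind B x := by
  obtain ⟨l, c, hl, hcase⟩ := ht
  obtain ⟨l', c', hl', hcase'⟩ := ht'
  have hll' : (0:ℝ) < l + l' := by linarith
  rcases hcase with ⟨hc, rfl⟩ | ⟨hc, rfl⟩ <;> rcases hcase' with ⟨hc', rfl⟩ | ⟨hc', rfl⟩
  · -- both lower type
    refine Or.inl ⟨l + l', (l * c + l' * c') / (l + l'), hll', Or.inl ⟨?_, ?_⟩⟩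
    · rw [div_lt_iff₀ hll']; nlinarith
    · funext x; simp only [Pi.add_apply]; field_simp; ring
  · -- lower + upper
    rcases lt_trichotomy l l' with hltr | hltr | hltr
    · have hd : (0:ℝ) < l' - l := by linarith
      refine Or.inl ⟨l' - l, (l' * c' - l * c) / (l' - l), hd, Or.inr ⟨?_, ?_⟩⟩
      · rw [lt_div_iff₀ hd]; nlinarith
      · funext x; simp only [Pi.add_apply]; field_simp; ring
    · refine Or.inr ⟨l * (c' - c), by nlinarith, ?_⟩
      funext x; simp only [Pi.add_apply]; subst hltr; ring
    · have hd : (0:ℝ) < l - l' := by linarith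
      refine Or.inl ⟨l - l', (l * c - l' * c') / (l - l'), hd, Or.inl ⟨?_, ?_⟩⟩
      · rw [div_lt_iff₀ hd]; nlinarith
      · funext x; simp only [Pi.add_apply]; field_simp; ring
  · -- upper + lower
    rcases lt_trichotomy l l' with hltr | hltr | hltr
    · have hd : (0:ℝ) < l' - l := by linarith
      refine Or.inl ⟨l' - l, (l' * c' - l * c) / (l' - l), hd, Or.inl ⟨?_, ?_⟩⟩
      · rw [div_lt_iff₀ hd]; nlinarith
      · funext x; simp only [Pi.add_apply]; field_simp; ring
    · refine Or.inr ⟨l * (c - c'), by nlinarith, ?_⟩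
      funext x; simp only [Pi.add_apply]; subst hltr; ring
    · have hd : (0:ℝ) < l - l' := by linarith
      refine Or.inl ⟨l - l', (l * c - l' * c') / (l - l'), hd, Or.inr ⟨?_, ?_⟩⟩
      · rw [lt_div_iff₀ hd]; nlinarith
      · funext x; simp only [Pi.add_apply]; field_simp; ring
  · -- both upper type
    refine Or.inl ⟨l + l', (l * c + l' * c') / (l + l'), hll', Or.inr ⟨?_, ?_⟩⟩
    · rw [lt_div_iff₀ hll']; nlinarith
    · funext x; simp only [Pi.add_apply]; field_simp; ring

lemma posi_union_structure {E T : Set (X → ℝ)}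
    (hEsm : ∀ g ∈ E, ∀ l : ℝ, 0 < l → l • g ∈ E)
    (hEad : ∀ g ∈ E, ∀ g' ∈ E, g + g' ∈ E)
    (hTsm : ∀ g ∈ T, ∀ l : ℝ, 0 < l → l • g ∈ T)
    (hTadd : ∀ t ∈ T, ∀ t' ∈ T, t + t' ∈ T ∨ t + t' ∈ E) :
    ∀ g ∈ posi (E ∪ T), g ∈ E ∨ g ∈ T ∨ ∃ e ∈ E, ∃ t ∈ T, g = e + t := by
  have main : ∀ (n : ℕ) (ls : Fin (n + 1) → ℝ) (hs : Fin (n + 1) → X → ℝ),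
      (∀ i, 0 < ls i) → (∀ i, hs i ∈ E ∪ T) →
      (∑ i, ls i • hs i) ∈ E ∨ (∑ i, ls i • hs i) ∈ T ∨
        ∃ e ∈ E, ∃ t ∈ T, (∑ i, ls i • hs i) = e + t := by
    intro n
    induction n with
    | zero =>
      intro ls hs hls hhs
      rw [Fin.sum_univ_one]
      rcases hhs 0 with h | h
      · exact Or.inl (hEsm _ h _ (hls 0))
      · exact Or.inr (Or.inl (hTsm _ h _ (hls 0)))
    | succ k ih =>
      intro ls hs hls hhs
      rw [Fin.sum_univ_castSucc]
      set S := ∑ i : Fin (k + 1), ls i.castSucc • hs i.castSucc with hSdef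
      have hS := ih (fun i => ls i.castSucc) (fun i => hs i.castSucc)
        (fun i => hls _) (fun i => hhs _)
      have hsnew : ls (Fin.last (k+1)) • hs (Fin.last (k+1)) ∈ E ∨
          ls (Fin.last (k+1)) • hs (Fin.last (k+1)) ∈ T := by
        rcases hhs (Fin.last (k+1)) with h | h
        · exact Or.inl (hEsm _ h _ (hls _))
        · exact Or.inr (hTsm _ h _ (hls _))
      set s := ls (Fin.last (k+1)) • hs (Fin.last (k+1)) with hsdef
      rcases hS with hSE | hST | ⟨e, heE, t, htT, hSeq⟩
      · rcases hsnew with hsE | hsT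
        · exact Or.inl (hEad _ hSE _ hsE)
        · exact Or.inr (Or.inr ⟨S, hSE, s, hsT, rfl⟩)
      · rcases hsnew with hsE | hsT
        · exact Or.inr (Or.inr ⟨s, hsE, S, hST, add_comm S s⟩)
        · rcases hTadd _ hST _ hsT with h | h
          · exact Or.inr (Or.inl h)
          · exact Or.inl h
      · rcases hsnew with hsE | hsT
        · refine Or.inr (Or.inr ⟨e + s, hEad _ heE _ hsE, t, htT, ?_⟩)
          rw [show S = e + t from hSeq]; abel
        · rcases hTadd _ htT _ hsT with h | h
          · exact Or.inr (Or.inr ⟨e, heE, t + s, h, by rw [show S = e + t from hSeq, add_assoc]⟩)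
          · refine Or.inl ?_
            have : S + s = e + (t + s) := by rw [show S = e + t from hSeq, add_assoc]
            rw [this]
            exact hEad _ heE _ h
  rintro g ⟨n, ls, hs, hls, hhs, rfl⟩
  exact main n ls hs hls hhs

lemma exists_maximal_attaining {C : Set ((X → ℝ) × Set X)} (hC : C ⊆ domC X)
    {lp : (X → ℝ) → Set X → EReal} (hlp : Coherent C lp)
    {f : X → ℝ} (hf : IsGamble f) {B : Set X} (hB : B.Nonempty) {α : ℝ}
    (h1 : natExtLP C lp f B ≤ (α : EReal)) (h2 : (α : EReal) ≤ -natExtLP C lp (-f) B) :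
    ∃ M : Set (X → ℝ), CoherentSDG M ∧
      (∀ g : X → ℝ, IsGamble g → g ≠ 0 → (g ∈ M ∨ -g ∈ M)) ∧
      ElpSet C lp ⊆ M ∧ lpOf M f B = (α : EReal) := by
  set E := ElpSet C lp with hEdef
  have hE : CoherentSDG E := ElpSet_coherent hlp
  have he0 : sSup (SM E f B) ≤ α := by
    have := h1
    rw [natExtLP, lpOf_eq_real hE hf hB] at this
    exact_mod_cast this
  have he1 : α ≤ -sSup (SM E (-f) B) := by
    have := h2
    rw [natExtLP, lpOf_eq_real hE hf.neg hB] at this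
    have h' : (α : EReal) ≤ ((-sSup (SM E (-f) B) : ℝ) : EReal) := by
      rw [EReal.coe_neg]; exact this
    exact_mod_cast h'
  -- key implications
  have hup : ∀ c : ℝ, (fun x => (c - f x) * ind B x) ∈ E → α ≤ c := by
    intro c hmem
    have hmem' : (-c) ∈ SM E (-f) B := by
      have heq : (fun x => ((-f) x - (-c)) * ind B x) = fun x => (c - f x) * ind B x := by
        funext x; simp only [Pi.neg_apply]; ring_nf
      show (fun x => ((-f) x - (-c)) * ind B x) ∈ E
      rw [heq]; exact hmem
    have := le_csSup (SM_bddAbove hE hf.neg) hmem'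
    linarith
  have hlo : ∀ c : ℝ, (fun x => (f x - c) * ind B x) ∈ E → c ≤ α := by
    intro c hmem
    have := le_csSup (SM_bddAbove hE hf) hmem
    linarith
  -- coherent extension Dα
  set T := Tset f B α with hTdef
  set Dα := posi (E ∪ T) with hDdef
  have hTadd : ∀ t ∈ T, ∀ t' ∈ T, t + t' ∈ T ∨ t + t' ∈ E := by
    intro t ht t' ht'
    rcases Tset_add ht ht' with h | ⟨d, hd, heq⟩
    · exact Or.inl h
    · refine Or.inr ?_
      rw [heq]
      apply gpos_subset_coherent hE
      obtain ⟨x0, hx0⟩ := hB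
      refine ⟨⟨d, fun x => ?_⟩, fun x => ?_, fun h0 => ?_⟩
      · rw [abs_of_nonneg (by nlinarith [ind_nonneg B x] : (0:ℝ) ≤ d * ind B x)]
        nlinarith [ind_le_one B x, ind_nonneg B x]
      · simp only [Pi.zero_apply]; nlinarith [ind_nonneg B x]
      · have := congrFun h0 x0
        rw [ind_of_mem hx0] at this
        simp only [mul_one, Pi.zero_apply] at this
        linarith
  have hstruct := posi_union_structure hE.d2 hE.d3
    (fun t ht l hl => Tset_smul ht hl) hTadd
  -- membership of E-shifted things
  have hEmem_of_T : ∀ (e : X → ℝ), e ∈ E → ∀ (l c : ℝ), 0 < l →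
      (e + (fun x => l * ((f x - c) * ind B x)) ≤ 0 →
        (fun x => (c - f x) * ind B x) ∈ E) ∧
      (e + (fun x => l * ((c - f x) * ind B x)) ≤ 0 →
        (fun x => (f x - c) * ind B x) ∈ E) := by
    intro e heE l c hl
    constructor
    · intro hle
      -- u := -t = l * ((c - f)·1_B); u = e + w, w ≥ 0
      set u : X → ℝ := fun x => l * ((c - f x) * ind B x) with hu
      have hug : IsGamble u := by
        have h2' : IsGamble (fun x => ((-f) x - (-c)) * ind B x) := isGamble_shift hf.neg (-c) B
        have := h2'.smul l
        have heq : l • (fun x => ((-f) x - (-c)) * ind B x) = u := by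
          funext x; simp only [Pi.smul_apply, Pi.neg_apply, smul_eq_mul, hu]; ring_nf
        rwa [heq] at this
      set w : X → ℝ := u - e with hw
      have hw0 : 0 ≤ w := by
        intro x
        have := hle x
        simp only [Pi.add_apply, Pi.zero_apply] at this
        simp only [hw, Pi.sub_apply, Pi.zero_apply, hu]
        nlinarith
      have huE : u ∈ E := by
        rcases eq_or_ne w 0 with hwz | hwz
        · have : u = e := by
            have := hwz
            rw [hw, sub_eq_zero] at this
            exact this
          rw [this]; exact heE
        · have hwE : w ∈ E := hE.d1 _ (by
            have : IsGamble w := by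
              rw [hw]
              have := hug.add (hE.subset_gambles e heE).neg
              have heq : u + -e = u - e := by funext x; simp [sub_eq_add_neg]
              rwa [heq] at this
            exact this) hw0 hwz
          have : e + w ∈ E := hE.d3 _ heE _ hwE
          have heq : e + w = u := by rw [hw]; funext x; simp
          rwa [heq] at this
      have : (1/l) • u ∈ E := hE.d2 _ huE _ (by positivity)
      have heq : (1/l) • u = fun x => (c - f x) * ind B x := by
        funext x; simp only [Pi.smul_apply, smul_eq_mul, hu]; field_simp
      rwa [heq] at this
    · intro hle
      set u : X → ℝ := fun x => l * ((f x - c) * ind B x) with hu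
      have hug : IsGamble u := by
        have h1' : IsGamble (fun x => (f x - c) * ind B x) := isGamble_shift hf c B
        have := h1'.smul l
        have heq : l • (fun x => (f x - c) * ind B x) = u := by
          funext x; simp only [Pi.smul_apply, smul_eq_mul, hu]
        rwa [heq] at this
      set w : X → ℝ := u - e with hw
      have hw0 : 0 ≤ w := by
        intro x
        have := hle x
        simp only [Pi.add_apply, Pi.zero_apply] at this
        simp only [hw, Pi.sub_apply, Pi.zero_apply, hu]
        nlinarith
      have huE : u ∈ E := by
        rcases eq_or_ne w 0 with hwz | hwz
        · have : u = e := by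
            have := hwz
            rw [hw, sub_eq_zero] at this
            exact this
          rw [this]; exact heE
        · have hwE : w ∈ E := hE.d1 _ (by
            have : IsGamble w := by
              rw [hw]
              have := hug.add (hE.subset_gambles e heE).neg
              have heq : u + -e = u - e := by funext x; simp [sub_eq_add_neg]
              rwa [heq] at this
            exact this) hw0 hwz
          have : e + w ∈ E := hE.d3 _ heE _ hwE
          have heq : e + w = u := by rw [hw]; funext x; simp
          rwa [heq] at this
      have : (1/l) • u ∈ E := hE.d2 _ huE _ (by positivity)
      have heq : (1/l) • u = fun x => (f x - c) * ind B x := by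
        funext x; simp only [Pi.smul_apply, smul_eq_mul, hu]; field_simp
      rwa [heq] at this
  -- pure T elements that are ≤ 0 are impossible
  have hT_not_nonpos : ∀ t ∈ T, ¬ (t ≤ 0) := by
    rintro t ⟨l, c, hl, hcase⟩ hle
    rcases hcase with ⟨hc, rfl⟩ | ⟨hc, rfl⟩
    · -- f ≤ c on B with c < α
      set u : X → ℝ := fun x => (c - f x) * ind B x with hu
      have hu0 : 0 ≤ u := by
        intro x
        have := hle x
        simp only [Pi.zero_apply] at this ⊢
        simp only [hu]
        nlinarith [ind_nonneg B x]
      rcases eq_or_ne u 0 with huz | hunz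
      · -- f = c on B
        have hfc : ∀ x ∈ B, f x = c := by
          intro x hx
          have := congrFun huz x
          simp only [hu, ind_of_mem hx, mul_one, Pi.zero_apply] at this
          linarith
        have hall : ∀ m : ℝ, m < -c → m ∈ SM E (-f) B := by
          intro m hm
          exact mem_SM_of_lt_on hE hf.neg hB fun x hx => by
            simp only [Pi.neg_apply]
            rw [hfc x hx]; linarith
        have := csSup_ge_of_forall_lt hall (SM_bddAbove hE hf.neg)
        linarith
      · have huE : u ∈ E := hE.d1 _ (by
            have := isGamble_shift hf.neg (-c) B
            have heq : (fun x => ((-f) x - (-c)) * ind B x) = u := by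
              funext x; simp only [Pi.neg_apply, hu]; ring_nf
            rwa [heq] at this) hu0 hunz
        have := hup c huE
        linarith
    · -- f ≥ c on B with α < c
      set u : X → ℝ := fun x => (f x - c) * ind B x with hu
      have hu0 : 0 ≤ u := by
        intro x
        have := hle x
        simp only [Pi.zero_apply] at this ⊢
        simp only [hu]
        nlinarith [ind_nonneg B x]
      rcases eq_or_ne u 0 with huz | hunz
      · have hfc : ∀ x ∈ B, f x = c := by
          intro x hx
          have := congrFun huz x
          simp only [hu, ind_of_mem hx, mul_one, Pi.zero_apply] at this
          linarith
        have hall : ∀ m : ℝ, m < c → m ∈ SM E f B := by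
          intro m hm
          exact mem_SM_of_lt_on hE hf hB fun x hx => by rw [hfc x hx]; exact hm
        have := csSup_ge_of_forall_lt hall (SM_bddAbove hE hf)
        linarith
      · have huE : u ∈ E := hE.d1 _ (isGamble_shift hf c B) hu0 hunz
        have := hlo c huE
        linarith
  -- coherence of Dα
  have hDα : CoherentSDG Dα := by
    refine { subset_gambles := ?_, d1 := ?_, d2 := ?_, d3 := ?_, d4 := ?_ }
    · intro g hg
      rcases hstruct g hg with h | h | ⟨e, he, t, ht, rfl⟩
      · exact hE.subset_gambles g h
      · exact Tset_gamble hf h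
      · exact (hE.subset_gambles e he).add (Tset_gamble hf ht)
    · intro g h1' h2' h3'
      exact subset_posi (Set.mem_union_left _ (hE.d1 g h1' h2' h3'))
    · exact fun g hg l hl => posi_smul hg hl
    · exact fun g hg g' hg' => posi_add hg hg'
    · intro g hgle hgmem
      rcases hstruct g hgmem with h | h | ⟨e, he, t, ht, rfl⟩
      · exact hE.d4 g hgle h
      · exact hT_not_nonpos g h hgle
      · obtain ⟨l, c, hl, hcase⟩ := ht
        rcases hcase with ⟨hc, rfl⟩ | ⟨hc, rfl⟩
        · have := hup c ((hEmem_of_T e he l c hl).1 hgle)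
          linarith
        · have := hlo c ((hEmem_of_T e he l c hl).2 hgle)
          linarith
  -- maximal extension
  obtain ⟨M, hM, hDM, hcomp⟩ := exists_maximal_coherent hDα
  have hEM : E ⊆ M := fun g hg => hDM (subset_posi (Set.mem_union_left _ hg))
  have hTM : T ⊆ M := fun g hg => hDM (subset_posi (Set.mem_union_right _ hg))
  refine ⟨M, hM, hcomp, hEM, ?_⟩
  -- lpOf M f B = α
  have hmemall : ∀ m : ℝ, m < α → m ∈ SM M f B := by
    intro m hm
    have ht : (fun x => 1 * ((f x - m) * ind B x)) ∈ T := ⟨1, m, one_pos, Or.inl ⟨hm, rfl⟩⟩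
    have heq : (fun x => 1 * ((f x - m) * ind B x)) = fun x => (f x - m) * ind B x := by
      funext x; ring
    show (fun x => (f x - m) * ind B x) ∈ M
    rw [← heq]
    exact hTM ht
  have hub : ∀ m ∈ SM M f B, m ≤ α := by
    intro m hm
    by_contra hcon
    push_neg at hcon
    set c := (α + m) / 2 with hcdef
    have hc1 : α < c := by rw [hcdef]; linarith
    have hc2 : c < m := by rw [hcdef]; linarith
    have ht : (fun x => 1 * ((c - f x) * ind B x)) ∈ T := ⟨1, c, one_pos, Or.inr ⟨hc1, rfl⟩⟩
    have hsum := hM.d3 _ hm _ (hTM ht)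
    refine hM.d4 _ ?_ hsum
    intro x
    simp only [Pi.add_apply, Pi.zero_apply]
    nlinarith [ind_nonneg B x]
  rw [lpOf_eq_real hM hf hB]
  have : sSup (SM M f B) = α :=
    le_antisymm (csSup_le ⟨α - 1, hmemall _ (by linarith)⟩ hub)
      (csSup_ge_of_forall_lt hmemall (SM_bddAbove hM hf))
  rw [this]

end Aux

/-- Proposition 18: the natural extension and its conjugate are the
lower and upper envelopes of the dominating conditional linear previsions, with
attainment of every intermediate value. -/
theorem stmt18 {X : Type*} [Nonempty X] (C : Set ((X → ℝ) × Set X)) (hC : C ⊆ domC X)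
    (lp : (X → ℝ) → Set X → EReal) (hlp : Coherent C lp)
    (Plp : Set ((X → ℝ) → Set X → EReal))
    (hPlp : Plp = {P | CondLinPrev P ∧ ∀ p ∈ C, lp p.1 p.2 ≤ P p.1 p.2}) :
    Plp.Nonempty ∧
    ∀ p ∈ domC X,
      (∀ P ∈ Plp, natExtLP C lp p.1 p.2 ≤ P p.1 p.2) ∧
      (∃ P ∈ Plp, P p.1 p.2 = natExtLP C lp p.1 p.2) ∧
      (∀ P ∈ Plp, P p.1 p.2 ≤ -natExtLP C lp (-p.1) p.2) ∧
      (∃ P ∈ Plp, P p.1 p.2 = -natExtLP C lp (-p.1) p.2) ∧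
      (∀ a : EReal, natExtLP C lp p.1 p.2 ≤ a → a ≤ -natExtLP C lp (-p.1) p.2 →
        ∃ P ∈ Plp, P p.1 p.2 = a) := by
  subst hPlp
  have hE : CoherentSDG (ElpSet C lp) := ElpSet_coherent hlp
  -- every maximal complete extension of ElpSet gives an element of Plp
  have hmem_of : ∀ M : Set (X → ℝ), CoherentSDG M →
      (∀ g : X → ℝ, IsGamble g → g ≠ 0 → (g ∈ M ∨ -g ∈ M)) → ElpSet C lp ⊆ M →
      lpOf M ∈ {P | CondLinPrev P ∧ ∀ p ∈ C, lp p.1 p.2 ≤ P p.1 p.2} := by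
    intro M hM hcomp hEM
    exact ⟨maximal_condLinPrev hM hcomp,
      fun q hq => (lp_le_natExtLP hC hlp q hq).trans (lpOf_mono hEM _ _)⟩
  -- lower envelope bound
  have hlb : ∀ P ∈ {P | CondLinPrev P ∧ ∀ p ∈ C, lp p.1 p.2 ≤ P p.1 p.2},
      ∀ q ∈ domC X, natExtLP C lp q.1 q.2 ≤ P q.1 q.2 := by
    rintro P ⟨⟨⟨DP, hDP, heqP⟩, hconj⟩, hdom⟩ q hq
    rw [heqP q hq]
    exact lpOf_mono
      (ElpSet_subset hDP fun r hr => (hdom r hr).trans_eq (heqP r (hC hr))) _ _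
  constructor
  · obtain ⟨M0, hM0, hEM0, hcomp0⟩ := exists_maximal_coherent hE
    exact ⟨lpOf M0, hmem_of M0 hM0 hcomp0 hEM0⟩
  intro p hp
  obtain ⟨hpf, hpB⟩ := hp
  have hEreal : natExtLP C lp p.1 p.2
      = ((sSup (SM (ElpSet C lp) p.1 p.2) : ℝ) : EReal) := lpOf_eq_real hE hpf hpB
  have hEreal' : natExtLP C lp (-p.1) p.2
      = ((sSup (SM (ElpSet C lp) (-p.1) p.2) : ℝ) : EReal) := lpOf_eq_real hE hpf.neg hpB
  have hEle : natExtLP C lp p.1 p.2 ≤ -natExtLP C lp (-p.1) p.2 := by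
    rw [hEreal, hEreal', ← EReal.coe_neg]
    exact_mod_cast sSup_SM_le_neg hE hpf hpB
  have key : ∀ a : EReal, natExtLP C lp p.1 p.2 ≤ a → a ≤ -natExtLP C lp (-p.1) p.2 →
      ∃ P ∈ {P | CondLinPrev P ∧ ∀ p ∈ C, lp p.1 p.2 ≤ P p.1 p.2}, P p.1 p.2 = a := by
    intro a
    induction a with
    | bot =>
      intro ha1 _
      rw [hEreal] at ha1
      exact absurd (le_bot_iff.1 ha1) (EReal.coe_ne_bot _)
    | coe α =>
      intro ha1 ha2
      obtain ⟨M, hM, hcomp, hEM, hval⟩ := exists_maximal_attaining hC hlp hpf hpB ha1 ha2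
      exact ⟨lpOf M, hmem_of M hM hcomp hEM, hval⟩
    | top =>
      intro _ ha2
      rw [hEreal', ← EReal.coe_neg] at ha2
      exact absurd (top_le_iff.1 ha2) (EReal.coe_ne_top _)
  refine ⟨fun P hP => hlb P hP p ⟨hpf, hpB⟩, key _ le_rfl hEle, ?_, key _ hEle le_rfl, key⟩
  rintro P hP
  obtain ⟨⟨hcohP, hconjP⟩, hdomP⟩ := hP
  have h1 : natExtLP C lp (-p.1) p.2 ≤ P (-p.1) p.2 :=
    hlb P ⟨⟨hcohP, hconjP⟩, hdomP⟩ (-p.1, p.2) ⟨hpf.neg, hpB⟩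
  rw [hconjP p ⟨hpf, hpB⟩]
  exact EReal.neg_le_neg_iff.2 h1

end IPaper
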